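/- arXiv:2504.01691 — 4 statements merged into one kernel-verified Lean document; each statement's English description precedes it below -/
import Mathlib

section
/- For every real r ≥ 2 and all x, y ∈ ℝⁿ, there exists a constant c > 0 depending only on r such that (|x|^{r-2} x − |y|^{r-2} y) · (x − y) ≥ c |x − y|^r. -/
/-- Monotonicity estimate for the `r`-Laplacian vector field, degenerate case `r ≥ 2`:
there is `c = c(r) > 0` with `(|x|^{r-2}x − |y|^{r-2}y)·(x−y) ≥ c |x−y|^r`
(with `|z|^{r-2} z = 0` for `z = 0`, automatic via rpow). -/
theorem rLaplacian_monotonicity_degenerate (r : ℝ) (hr : 2 ≤ r) :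
    ∃ c : ℝ, 0 < c ∧ ∀ (n : ℕ) (x y : EuclideanSpace ℝ (Fin n)),
      c * ‖x - y‖ ^ r ≤
        (inner ℝ (‖x‖ ^ (r - 2) • x - ‖y‖ ^ (r - 2) • y) (x - y) : ℝ) := by
  refine ⟨(2:ℝ) ^ (1 - r), Real.rpow_pos_of_pos two_pos _, fun n x y => ?_⟩
  set s := r - 2 with hs
  have hs0 : (0:ℝ) ≤ s := by simp [hs]; linarith
  have ha : (0:ℝ) ≤ ‖x‖ := norm_nonneg x
  have hb : (0:ℝ) ≤ ‖y‖ := norm_nonneg y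
  have hd0 : (0:ℝ) ≤ ‖x - y‖ := norm_nonneg _
  -- expand the inner product
  have hinner : (inner ℝ (‖x‖ ^ s • x - ‖y‖ ^ s • y) (x - y) : ℝ)
      = ‖x‖ ^ s * ‖x‖ ^ 2 + ‖y‖ ^ s * ‖y‖ ^ 2
        - (‖x‖ ^ s + ‖y‖ ^ s) * inner ℝ x y := by
    rw [inner_sub_left, inner_sub_right, inner_sub_right, real_inner_smul_left,
      real_inner_smul_left, real_inner_smul_left, real_inner_smul_left,
      real_inner_self_eq_norm_sq, real_inner_self_eq_norm_sq, real_inner_comm y x]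
    ring
  have hdsq : ‖x - y‖ ^ 2 = ‖x‖ ^ 2 + ‖y‖ ^ 2 - 2 * inner ℝ x y := by
    rw [norm_sub_sq_real]; ring
  -- key monotonicity: (a^s - b^s)(a^2 - b^2) ≥ 0
  have hkey : 0 ≤ (‖x‖ ^ s - ‖y‖ ^ s) * (‖x‖ ^ 2 - ‖y‖ ^ 2) := by
    rcases le_total ‖x‖ ‖y‖ with h | h
    · have h1 : ‖x‖ ^ s ≤ ‖y‖ ^ s := Real.rpow_le_rpow ha h hs0
      have h2 : ‖x‖ ^ 2 ≤ ‖y‖ ^ 2 := by nlinarith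
      nlinarith
    · have h1 : ‖y‖ ^ s ≤ ‖x‖ ^ s := Real.rpow_le_rpow hb h hs0
      have h2 : ‖y‖ ^ 2 ≤ ‖x‖ ^ 2 := by nlinarith
      nlinarith
  -- inner ≥ (1/2)(a^s+b^s) * d^2
  have hstep1 : (1/2) * (‖x‖ ^ s + ‖y‖ ^ s) * ‖x - y‖ ^ 2
      ≤ (inner ℝ (‖x‖ ^ s • x - ‖y‖ ^ s • y) (x - y) : ℝ) := by
    rw [hinner, hdsq]; nlinarith
  rcases eq_or_lt_of_le hd0 with hd | hd
  · rw [← hd]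
    have : (0:ℝ) ^ r = 0 := Real.zero_rpow (by linarith)
    rw [this, mul_zero]
    exact le_trans (by nlinarith [Real.rpow_nonneg ha s, Real.rpow_nonneg hb s]) hstep1
  -- d^s ≤ 2^s (a^s + b^s)
  have htri : ‖x - y‖ ≤ ‖x‖ + ‖y‖ := norm_sub_le x y
  have hmax : (max ‖x‖ ‖y‖) ^ s ≤ ‖x‖ ^ s + ‖y‖ ^ s := by
    rcases le_total ‖x‖ ‖y‖ with h | h
    · rw [max_eq_right h]
      nlinarith [Real.rpow_nonneg ha s]
    · rw [max_eq_left h]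
      nlinarith [Real.rpow_nonneg hb s]
  have hds : ‖x - y‖ ^ s ≤ 2 ^ s * (‖x‖ ^ s + ‖y‖ ^ s) := by
    have h1 : ‖x - y‖ ≤ 2 * max ‖x‖ ‖y‖ := by
      rcases le_total ‖x‖ ‖y‖ with h | h
      · rw [max_eq_right h]; linarith
      · rw [max_eq_left h]; linarith
    calc ‖x - y‖ ^ s ≤ (2 * max ‖x‖ ‖y‖) ^ s := Real.rpow_le_rpow hd0 h1 hs0
      _ = 2 ^ s * (max ‖x‖ ‖y‖) ^ s := Real.mul_rpow (by norm_num) (le_max_of_le_left ha)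
      _ ≤ 2 ^ s * (‖x‖ ^ s + ‖y‖ ^ s) := by
          have : (0:ℝ) < 2 ^ s := Real.rpow_pos_of_pos two_pos s
          nlinarith
  -- conclude
  have hdr : ‖x - y‖ ^ r = ‖x - y‖ ^ s * ‖x - y‖ ^ 2 := by
    rw [show r = s + 2 by simp [hs], Real.rpow_add hd,
      Real.rpow_two]
  have h2s : (2:ℝ) ^ (1 - r) * 2 ^ s = 1/2 := by
    rw [← Real.rpow_add two_pos, show 1 - r + s = -1 by rw [hs]; ring,
      Real.rpow_neg_one]
    norm_num
  have hfinal : (2:ℝ) ^ (1 - r) * ‖x - y‖ ^ r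
      ≤ (1/2) * (‖x‖ ^ s + ‖y‖ ^ s) * ‖x - y‖ ^ 2 := by
    rw [hdr, ← h2s]
    have hc : (0:ℝ) < 2 ^ (1 - r) := Real.rpow_pos_of_pos two_pos _
    have := mul_le_mul_of_nonneg_left hds hc.le
    nlinarith [sq_nonneg ‖x - y‖]
  exact hfinal.trans hstep1
end

section
/- For every real r with 1 < r < 2 and all x, y ∈ ℝⁿ not both zero, there exists a constant c > 0 depending only on r such that (|x|^{r-2} x − |y|^{r-2} y) · (x − y) ≥ c |x − y|² / (|x| + |y|)^{2−r}. -/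
open Real

lemma pow_shift1 {r b : ℝ} (hr1 : 1 < r) (hr2 : r < 2) (hb : 0 ≤ b) :
    b ^ (r - 2) * b = b ^ (r - 1) := by
  rcases hb.eq_or_lt with h | h
  · simp [← h, Real.zero_rpow (by linarith : r - 2 ≠ 0), Real.zero_rpow (by linarith : r - 1 ≠ 0)]
  · rw [← Real.rpow_add_one h.ne']; ring_nf

lemma pow_shift2 {r b : ℝ} (hr1 : 1 < r) (hr2 : r < 2) (hb : 0 ≤ b) :
    b ^ (r - 2) * (b * b) = b ^ r := by
  rcases hb.eq_or_lt with h | h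
  · simp [← h, Real.zero_rpow (by linarith : r - 2 ≠ 0), Real.zero_rpow (by linarith : r ≠ 0)]
  · rw [← mul_assoc, pow_shift1 hr1 hr2 hb, ← Real.rpow_add_one h.ne']; ring_nf

lemma key1 {r a b : ℝ} (hr1 : 1 < r) (hr2 : r < 2) (hb : 0 ≤ b) (ha : 0 < a) :
    b ^ (r - 1) ≤ a ^ (r - 1) - (r - 1) * (a ^ (r - 2) * (a - b)) := by
  have hs : -1 ≤ b / a - 1 := by
    have : 0 ≤ b / a := div_nonneg hb ha.le
    linarith
  have hB := rpow_one_add_le_one_add_mul_self hs (by linarith : (0:ℝ) ≤ r - 1)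
    (by linarith : r - 1 ≤ 1)
  have h1 : (1 + (b / a - 1)) = b / a := by ring
  rw [h1] at hB
  have h2 : (b / a) ^ (r - 1) = b ^ (r - 1) / a ^ (r - 1) := Real.div_rpow hb ha.le _
  rw [h2] at hB
  have hap : (0:ℝ) < a ^ (r - 1) := Real.rpow_pos_of_pos ha _
  rw [div_le_iff₀ hap] at hB
  have h3 : a ^ (r - 1) / a = a ^ (r - 2) := by
    rw [← Real.rpow_sub_one ha.ne']; ring_nf
  have h4 : (1 + (r - 1) * (b / a - 1)) * a ^ (r - 1)
      = a ^ (r - 1) - (r - 1) * (a ^ (r - 2) * (a - b)) := by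
    rw [← h3]; field_simp; ring
  linarith [hB, h4.symm.le]

-- main scalar inequality, assuming b ≤ a
set_option maxHeartbeats 1000000 in
lemma scalar_key {r a b t : ℝ} (hr1 : 1 < r) (hr2 : r < 2) (hb : 0 ≤ b) (hba : b ≤ a)
    (hab : 0 < a + b) (ht : |t| ≤ a * b) :
    (r - 1) / 2 * ((a * a + b * b - 2 * t) / (a + b) ^ (2 - r)) ≤
      a ^ (r - 2) * (a * a) + b ^ (r - 2) * (b * b) - (a ^ (r - 2) + b ^ (r - 2)) * t := by
  have ha : 0 < a := by linarith
  obtain ⟨htl, htu⟩ := abs_le.mp ht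
  set P := (a + b) ^ (2 - r) with hPdef
  have hP : 0 < P := Real.rpow_pos_of_pos hab _
  have ha1 : a ^ (r - 2) * a = a ^ (r - 1) := pow_shift1 hr1 hr2 ha.le
  have hb1 : b ^ (r - 2) * b = b ^ (r - 1) := pow_shift1 hr1 hr2 hb
  have ha2 : a ^ (r - 2) * (a * a) = a ^ r := pow_shift2 hr1 hr2 ha.le
  have hb2 : b ^ (r - 2) * (b * b) = b ^ r := pow_shift2 hr1 hr2 hb
  -- a^{2-r} ≤ P
  have haP : a ^ (2 - r) ≤ P := Real.rpow_le_rpow ha.le (by linarith) (by linarith)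
  -- a^{r-2} * P ≥ 1
  have key2 : 1 ≤ a ^ (r - 2) * P := by
    have h := mul_le_mul_of_nonneg_left haP (Real.rpow_nonneg ha.le (r - 2))
    have : a ^ (r - 2) * a ^ (2 - r) = 1 := by
      rw [← Real.rpow_add ha]; norm_num
    linarith
  -- a^r * a^{2-r} = a * a,  a^{r-1} * a^{2-r} = a
  have hq1 : a ^ r * a ^ (2 - r) = a * a := by
    rw [← Real.rpow_add ha]
    rw [show r + (2 - r) = 1 + 1 by ring, Real.rpow_add ha, Real.rpow_one]
  have hq2 : a ^ (r - 1) * a ^ (2 - r) = a := by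
    rw [← Real.rpow_add ha]; norm_num
  have hk1 := key1 hr1 hr2 hb ha
  have har1 : (0:ℝ) ≤ a ^ (r - 1) := Real.rpow_nonneg ha.le _
  have hbr1 : (0:ℝ) ≤ b ^ (r - 1) := Real.rpow_nonneg hb _
  have hbr : (0:ℝ) ≤ b ^ r := Real.rpow_nonneg hb _
  have har2 : (0:ℝ) ≤ a ^ (r - 2) := Real.rpow_nonneg ha.le _
  -- endpoint F1 : (r-1)/2 * (a-b)^2 ≤ (a^r + b^r)*P - (a^{r-2}+b^{r-2})*P*(a*b)
  have F1 : (r - 1) / 2 * ((a - b) * (a - b)) ≤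
      (a ^ r + b ^ r) * P - (a ^ (r - 2) + b ^ (r - 2)) * P * (a * b) := by
    have e1 : a ^ (r - 1) * a = a ^ r := by
      calc a ^ (r - 1) * a = a ^ (r - 2) * a * a := by rw [ha1]
        _ = a ^ r := by rw [mul_assoc, ha2]
    have e2 : b ^ (r - 1) * b = b ^ r := by
      calc b ^ (r - 1) * b = b ^ (r - 2) * b * b := by rw [hb1]
        _ = b ^ r := by rw [mul_assoc, hb2]
    have hfac : (a ^ r + b ^ r) * P - (a ^ (r - 2) + b ^ (r - 2)) * P * (a * b)
        = (a ^ (r - 1) - b ^ (r - 1)) * (a - b) * P := by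
      linear_combination (-P) * e1 + (-P) * e2 + (-(b*P)) * ha1 + (-(a*P)) * hb1
    rw [hfac]
    have hd : 0 ≤ a - b := by linarith
    -- (a^{r-1} - b^{r-1}) ≥ (r-1) a^{r-2} (a-b) ≥ 0
    have s1 : (r - 1) * (a ^ (r - 2) * (a - b)) * ((a - b) * P) ≤
        (a ^ (r - 1) - b ^ (r - 1)) * ((a - b) * P) := by
      apply mul_le_mul_of_nonneg_right (by linarith) (mul_nonneg hd hP.le)
    have s2 : (r - 1) * ((a - b) * (a - b)) ≤ (r - 1) * (a ^ (r - 2) * (a - b)) * ((a - b) * P) := by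
      have h0 : (r - 1) * ((a - b) * (a - b)) * 1 ≤
          (r - 1) * ((a - b) * (a - b)) * (a ^ (r - 2) * P) := by
        apply mul_le_mul_of_nonneg_left key2
        exact mul_nonneg (by linarith) (mul_nonneg hd hd)
      nlinarith [h0]
    nlinarith [s1, s2]
  -- endpoint F2 : (r-1)/2 * (a+b)^2 ≤ (a^r + b^r)*P + (a^{r-2}+b^{r-2})*P*(a*b)
  have F2 : (r - 1) / 2 * ((a + b) * (a + b)) ≤
      (a ^ r + b ^ r) * P + (a ^ (r - 2) + b ^ (r - 2)) * P * (a * b) := by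
    have g1 : a * a ≤ a ^ r * P := by
      calc a * a = a ^ r * a ^ (2 - r) := hq1.symm
        _ ≤ a ^ r * P := by
            apply mul_le_mul_of_nonneg_left haP (Real.rpow_nonneg ha.le _)
    have g2 : a * b ≤ a ^ (r - 2) * P * (a * b) := by
      have := mul_le_mul_of_nonneg_right key2 (mul_nonneg ha.le hb)
      linarith
    have g3 : (0:ℝ) ≤ b ^ (r - 2) * P * (a * b) := by positivity
    have h5 : (r - 1) / 2 * ((a + b) * (a + b)) ≤ a * a + a * b := by
      nlinarith [mul_nonneg (by linarith : (0:ℝ) ≤ a - b) hab.le,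
        mul_nonneg (by linarith : (0:ℝ) ≤ 2 - r) (mul_nonneg hab.le hab.le)]
    have hexp : (a ^ r + b ^ r) * P + (a ^ (r - 2) + b ^ (r - 2)) * P * (a * b)
        = a ^ r * P + b ^ r * P + a ^ (r - 2) * P * (a * b) + b ^ (r - 2) * P * (a * b) := by
      ring
    rw [hexp]
    have hbrP : (0:ℝ) ≤ b ^ r * P := mul_nonneg hbr hP.le
    linarith [g1, g2, g3, h5, hbrP]
  -- combine: affine in t
  rw [mul_div_assoc', div_le_iff₀ hP]
  set S := (a ^ (r - 2) + b ^ (r - 2)) * P with hS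
  have hgoal : (r - 1) / 2 * (a * a + b * b - 2 * t) ≤
      (a ^ r + b ^ r) * P - S * t := by
    rcases le_or_gt (r - 1) S with hc | hc
    · -- slope S ≥ r-1 = 2c : minimum at t = a*b, use F1
      nlinarith [mul_nonneg (by linarith : (0:ℝ) ≤ S - (r - 1)) (by linarith : 0 ≤ a * b - t)]
    · -- slope S < 2c : minimum at t = -a*b, use F2
      nlinarith [mul_nonneg (by linarith : (0:ℝ) ≤ (r - 1) - S) (by linarith : 0 ≤ a * b + t)]
  calc (r - 1) / 2 * (a * a + b * b - 2 * t) ≤ (a ^ r + b ^ r) * P - S * t := hgoal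
    _ = (a ^ (r - 2) * (a * a) + b ^ (r - 2) * (b * b) - (a ^ (r - 2) + b ^ (r - 2)) * t) * P := by
        rw [ha2, hb2, hS]; ring

/-- Monotonicity estimate for the `r`-Laplacian vector field, singular case `1 < r < 2`:
there is `c = c(r) > 0` with
`(|x|^{r-2}x − |y|^{r-2}y)·(x−y) ≥ c |x−y|² / (|x|+|y|)^{2−r}` for `(x,y) ≠ (0,0)`. -/
theorem rLaplacian_monotonicity_singular (r : ℝ) (hr1 : 1 < r) (hr2 : r < 2) :
    ∃ c : ℝ, 0 < c ∧ ∀ (n : ℕ) (x y : EuclideanSpace ℝ (Fin n)), (x, y) ≠ (0, 0) →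
      c * (‖x - y‖ ^ (2 : ℝ) / (‖x‖ + ‖y‖) ^ (2 - r)) ≤
        (inner ℝ (‖x‖ ^ (r - 2) • x - ‖y‖ ^ (r - 2) • y) (x - y) : ℝ) := by
  refine ⟨(r - 1) / 2, by linarith, ?_⟩
  intro n x y hxy
  set a := ‖x‖ with hadef
  set b := ‖y‖ with hbdef
  set t : ℝ := inner ℝ x y with htdef
  have hab : 0 < a + b := by
    rcases lt_or_ge 0 (a + b) with h | h
    · exact h
    · exfalso
      have hx : x = 0 := norm_eq_zero.mp (le_antisymm (by linarith [norm_nonneg y]) (norm_nonneg x))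
      have hy : y = 0 := norm_eq_zero.mp (le_antisymm (by linarith [norm_nonneg x]) (norm_nonneg y))
      exact hxy (by rw [hx, hy])
  have ht : |t| ≤ a * b := abs_real_inner_le_norm x y
  have hin : (inner ℝ (a ^ (r - 2) • x - b ^ (r - 2) • y) (x - y) : ℝ) =
      a ^ (r - 2) * (a * a) + b ^ (r - 2) * (b * b) - (a ^ (r - 2) + b ^ (r - 2)) * t := by
    simp only [inner_sub_left, inner_sub_right, real_inner_smul_left,
      real_inner_self_eq_norm_mul_norm]
    rw [show (inner ℝ y x : ℝ) = t from by rw [real_inner_comm],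
      ← hadef, ← hbdef]
    ring
  have hnorm : ‖x - y‖ ^ (2 : ℝ) = a * a + b * b - 2 * t := by
    have h2 : ‖x - y‖ ^ (2:ℝ) = ‖x - y‖ ^ (2:ℕ) := by
      rw [← Real.rpow_natCast]; norm_num
    rw [h2, norm_sub_sq_real, ← htdef, ← hadef, ← hbdef]
    ring
  rw [hin, hnorm]
  rcases le_total b a with h | h
  · exact scalar_key hr1 hr2 (norm_nonneg y) h hab ht
  · have hsym := scalar_key hr1 hr2 (norm_nonneg x) h (by linarith)
      (by rwa [mul_comm] : |t| ≤ b * a)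
    rw [show b + a = a + b from add_comm b a,
      show b * b + a * a - 2 * t = a * a + b * b - 2 * t from by ring] at hsym
    linarith
end

section
/- For all 1 < r < ∞ and x, y ∈ ℝⁿ with 1 < r < 2 and (x,y) ≠ (0,0), the inequality |x − y|^r ≤ C [(|x|^{r-2}x − |y|^{r-2}y)·(x−y)]^{r/2} (|x| + |y|)^{(2−r)r/2} holds for some constant C > 0 depending only on r. -/
open Real

/-- Tangent-line/Bernoulli consequence: for `0 < s < 1`, `0 ≤ b ≤ a`,
`s * (a+b)^(s-1) * (a-b) ≤ a^s - b^s`. -/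
private lemma scalar_key_s18 {s a b : ℝ} (hs0 : 0 < s) (hs1 : s < 1) (hb : 0 ≤ b)
    (hba : b ≤ a) (ha : 0 < a) :
    s * (a + b) ^ (s - 1) * (a - b) ≤ a ^ s - b ^ s := by
  have hu : (-1 : ℝ) ≤ b / a - 1 := by
    have : 0 ≤ b / a := div_nonneg hb ha.le
    linarith
  have hbern := rpow_one_add_le_one_add_mul_self hu hs0.le hs1.le
  rw [add_sub_cancel] at hbern
  -- hbern : (b/a)^s ≤ 1 + s*(b/a - 1)
  have hdiv : (b / a) ^ s = b ^ s / a ^ s := Real.div_rpow hb ha.le s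
  rw [hdiv] at hbern
  have has : 0 < a ^ s := Real.rpow_pos_of_pos ha s
  -- multiply through by a^s : b^s ≤ a^s + s * a^s * (b/a - 1)
  have h1 : b ^ s ≤ a ^ s + s * a ^ s * (b / a - 1) := by
    have := mul_le_mul_of_nonneg_right hbern has.le
    rw [div_mul_cancel₀ _ has.ne'] at this
    linarith [this]
  -- a^s * (b/a) = a^(s-1) * b
  have h2 : a ^ s / a = a ^ (s - 1) := by
    rw [← Real.rpow_sub_one ha.ne']
  have h3 : b ^ s ≤ a ^ s + s * a ^ (s - 1) * (b - a) := by
    have e : s * a ^ (s - 1) * (b - a) = s * a ^ s * (b / a - 1) := by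
      rw [Real.rpow_sub_one ha.ne']
      field_simp
    linarith [h1]
  -- a^(s-1) ≥ (a+b)^(s-1)
  have h4 : (a + b) ^ (s - 1) ≤ a ^ (s - 1) :=
    Real.rpow_le_rpow_of_nonpos ha (by linarith) (by linarith)
  have h5 : s * (a + b) ^ (s - 1) * (a - b) ≤ s * a ^ (s - 1) * (a - b) := by
    have hab0 : 0 ≤ a - b := by linarith
    nlinarith [mul_nonneg (mul_nonneg hs0.le (sub_nonneg.2 h4)) hab0]
  nlinarith [h3, h5]

/-- Symmetric version: `s * (a+b)^(s-1) * (a-b)^2 ≤ (a^s - b^s) * (a - b)`. -/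
private lemma scalar_key₂ {s a b : ℝ} (hs0 : 0 < s) (hs1 : s < 1) (ha : 0 ≤ a) (hb : 0 ≤ b)
    (hab : 0 < a + b) :
    s * (a + b) ^ (s - 1) * (a - b) ^ 2 ≤ (a ^ s - b ^ s) * (a - b) := by
  rcases le_total b a with h | h
  · have ha' : 0 < a := by
      rcases lt_or_eq_of_le ha with h' | h'
      · exact h'
      · exfalso; have : b = 0 := le_antisymm (h.trans h'.symm.le) hb; linarith [hab, h'.symm, this]
    have := scalar_key_s18 hs0 hs1 hb h ha'
    nlinarith [this, sq_nonneg (a - b)]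
  · have hb' : 0 < b := by
      rcases lt_or_eq_of_le hb with h' | h'
      · exact h'
      · exfalso; have : a = 0 := le_antisymm (h.trans h'.symm.le) ha; linarith
    have := scalar_key_s18 hs0 hs1 ha h hb'
    have hcomm : b + a = a + b := by ring
    rw [hcomm] at this
    nlinarith [this]

/-- Core pointwise inequality in terms of norms and the inner product. -/
private lemma core_ineq {r : ℝ} (hr1 : 1 < r) (hr2 : r < 2) {a b t : ℝ}
    (ha : 0 ≤ a) (hb : 0 ≤ b) (hab : 0 < a + b) (ht : |t| ≤ a * b) :
    (r - 1) * (a ^ 2 + b ^ 2 - 2 * t) * (a + b) ^ (r - 2) ≤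
      a ^ (r - 2) * (a ^ 2 - t) + b ^ (r - 2) * (b ^ 2 - t) := by
  have hs0 : 0 < r - 1 := by linarith
  have hs1 : r - 1 < 1 := by linarith
  rcases eq_or_lt_of_le ha with ha0 | ha0
  · -- a = 0, hence t = 0
    have ha0 : a = 0 := ha0.symm
    have ht0 : t = 0 := by
      rw [ha0] at ht; simpa using ht
    subst ha0; subst ht0
    have hb' : 0 < b := by linarith
    simp only [zero_add, mul_zero, sub_zero, zero_pow, Real.zero_rpow (by linarith : r - 2 ≠ 0)]
    nlinarith [mul_nonneg (Real.rpow_nonneg hb (r - 2)) (sq_nonneg b)]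
  rcases eq_or_lt_of_le hb with hb0 | hb0
  · -- b = 0, hence t = 0
    have hb0 : b = 0 := hb0.symm
    have ht0 : t = 0 := by
      rw [hb0] at ht; simpa using ht
    subst hb0; subst ht0
    simp only [add_zero, mul_zero, sub_zero, zero_pow, Real.zero_rpow (by linarith : r - 2 ≠ 0)]
    nlinarith [mul_nonneg (Real.rpow_nonneg ha (r - 2)) (sq_nonneg a)]
  -- now a, b > 0
  set P := a ^ (r - 2) with hP
  set Q := b ^ (r - 2) with hQ
  set R := (a + b) ^ (r - 2) with hR
  have ha1 : a ^ (r - 2) * a = a ^ (r - 1) := by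
    rw [← Real.rpow_add_one ha0.ne']; ring_nf
  have hb1 : b ^ (r - 2) * b = b ^ (r - 1) := by
    rw [← Real.rpow_add_one hb0.ne']; ring_nf
  -- bracket 1 via scalar_key₂
  have hbr1 : (r - 1) * R * (a - b) ^ 2 ≤ (P * a - Q * b) * (a - b) := by
    have := scalar_key₂ hs0 hs1 ha hb hab
    have hexp : r - 1 - 1 = r - 2 := by ring
    rw [hexp] at this
    calc (r - 1) * R * (a - b) ^ 2 = (r - 1) * (a + b) ^ (r - 2) * (a - b) ^ 2 := by rw [hR]
      _ ≤ (a ^ (r - 1) - b ^ (r - 1)) * (a - b) := this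
      _ = (P * a - Q * b) * (a - b) := by rw [hP, hQ, ha1, hb1]
  -- bracket 2 : P + Q ≥ 2 R ≥ 2 (r-1) R
  have hPR : R ≤ P := Real.rpow_le_rpow_of_nonpos ha0 (by linarith) (by linarith)
  have hQR : R ≤ Q := Real.rpow_le_rpow_of_nonpos hb0 (by linarith) (by linarith)
  have hR0 : 0 < R := Real.rpow_pos_of_pos hab _
  have htab : t ≤ a * b := (le_abs_self t).trans ht
  have hbr2 : 0 ≤ (a * b - t) * (P + Q - 2 * (r - 1) * R) := by
    apply mul_nonneg (by linarith)
    nlinarith [hPR, hQR, hR0]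
  nlinarith [hbr1, hbr2]

/-- Key pointwise inequality for the comparison principle, `1 < r < 2`: there is `C = C(r) > 0`
with `|x−y|^r ≤ C [(|x|^{r-2}x − |y|^{r-2}y)·(x−y)]^{r/2} (|x|+|y|)^{(2−r)r/2}` for
`(x, y) ≠ (0, 0)`. -/
theorem rLaplacian_comparison_key_inequality (r : ℝ) (hr1 : 1 < r) (hr2 : r < 2) :
    ∃ C : ℝ, 0 < C ∧ ∀ (n : ℕ) (x y : EuclideanSpace ℝ (Fin n)), (x, y) ≠ (0, 0) →
      ‖x - y‖ ^ r ≤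
        C * (inner ℝ (‖x‖ ^ (r - 2) • x - ‖y‖ ^ (r - 2) • y) (x - y) : ℝ) ^ (r / 2) *
          (‖x‖ + ‖y‖) ^ ((2 - r) * r / 2) := by
  have hc : (0:ℝ) < (r - 1)⁻¹ := by
    have : (0:ℝ) < r - 1 := by linarith
    positivity
  refine ⟨((r - 1)⁻¹) ^ (r / 2), Real.rpow_pos_of_pos hc _, fun n x y hxy => ?_⟩
  set a := ‖x‖ with hadef
  set b := ‖y‖ with hbdef
  set t : ℝ := inner ℝ x y with htdef
  have ha : 0 ≤ a := norm_nonneg x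
  have hb : 0 ≤ b := norm_nonneg y
  have hab : 0 < a + b := by
    rcases (add_nonneg ha hb).lt_or_eq with h | h
    · exact h
    · exfalso
      have ha0 : a = 0 := by linarith [ha, hb, h.symm]
      have hb0 : b = 0 := by linarith [ha, hb, h.symm]
      exact hxy (by simp [Prod.ext_iff, norm_eq_zero.mp ha0, norm_eq_zero.mp hb0])
  have ht : |t| ≤ a * b := abs_real_inner_le_norm x y
  have key := core_ineq hr1 hr2 ha hb hab ht
  -- identify the inner product
  have hyx : (inner ℝ y x : ℝ) = t := (real_inner_comm y x).symm
  have hI : (inner ℝ (‖x‖ ^ (r - 2) • x - ‖y‖ ^ (r - 2) • y) (x - y) : ℝ)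
      = a ^ (r - 2) * (a ^ 2 - t) + b ^ (r - 2) * (b ^ 2 - t) := by
    simp only [inner_sub_left, inner_sub_right, real_inner_smul_left,
      real_inner_self_eq_norm_sq, ← hadef, ← hbdef, ← htdef, hyx]
    ring
  set I : ℝ := (inner ℝ (‖x‖ ^ (r - 2) • x - ‖y‖ ^ (r - 2) • y) (x - y) : ℝ) with hIdef
  have hD2 : ‖x - y‖ ^ 2 = a ^ 2 + b ^ 2 - 2 * t := by
    rw [norm_sub_sq_real]; ring
  set D := ‖x - y‖ with hDdef
  set S := a + b with hSdef
  rw [← hI, ← hD2] at key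
  -- key : (r-1) * D^2 * S^(r-2) ≤ I
  have hI0 : 0 ≤ I := by
    refine le_trans ?_ key
    have h0 : 0 ≤ S ^ (r - 2) := Real.rpow_nonneg hab.le _
    nlinarith [mul_nonneg (mul_nonneg (by linarith : (0:ℝ) ≤ r - 1) (sq_nonneg D)) h0]
  have hS2r : 0 ≤ S ^ (2 - r) := Real.rpow_nonneg hab.le _
  have hstep : (r - 1) * D ^ 2 ≤ I * S ^ (2 - r) := by
    have h := mul_le_mul_of_nonneg_right key hS2r
    have hSS : S ^ (r - 2) * S ^ (2 - r) = 1 := by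
      rw [← Real.rpow_add hab]; norm_num
    calc (r - 1) * D ^ 2 = (r - 1) * D ^ 2 * (S ^ (r - 2) * S ^ (2 - r)) := by rw [hSS]; ring
      _ = (r - 1) * D ^ 2 * S ^ (r - 2) * S ^ (2 - r) := by ring
      _ ≤ I * S ^ (2 - r) := h
  have hD2le : D ^ 2 ≤ (r - 1)⁻¹ * I * S ^ (2 - r) := by
    have hr1' : (0:ℝ) < r - 1 := by linarith
    rw [mul_assoc, inv_mul_eq_div, le_div_iff₀ hr1']
    linarith [hstep]
  -- raise to power r/2
  have hr2' : (0:ℝ) ≤ r / 2 := by linarith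
  have hmain := Real.rpow_le_rpow (sq_nonneg D) hD2le hr2'
  have hDr : (D ^ 2) ^ (r / 2 : ℝ) = D ^ r := by
    rw [← Real.rpow_natCast D 2, ← Real.rpow_mul (norm_nonneg _)]
    congr 1
    push_cast
    ring
  have hsplit : ((r - 1)⁻¹ * I * S ^ (2 - r)) ^ (r / 2 : ℝ)
      = ((r - 1)⁻¹) ^ (r / 2 : ℝ) * I ^ (r / 2 : ℝ) * S ^ ((2 - r) * r / 2) := by
    rw [Real.mul_rpow (mul_nonneg hc.le hI0) hS2r, Real.mul_rpow hc.le hI0,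
      ← Real.rpow_mul hab.le]
    ring_nf
  rw [hDr, hsplit] at hmain
  exact hmain
end

section
/- Let 1 < p < ∞, let z, ξ ∈ ℝⁿ with |z| = 1, ξ ≠ 0, and z · ξ = 0, and set s = (p−1)^{-1/2}|ξ| and ζ± = ±s z + i ξ ∈ ℂⁿ. Let A = I + (p−2) z⊗z. Then ζ±·Aζ± = 0, so that the complex exponentials V±(x) = exp(ζ±·x) satisfy Div(A ∇V±) = 0 on ℝⁿ; moreover A^q ∇V₊ · ∇V₋ = −((p+q−2)/(p−1)) |ξ|² e^{2i ξ·x}, where A^q = I + (q−2) z⊗z and 1 < q < ∞. -/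
open scoped RealInnerProductSpace

noncomputable def Lc (n : ℕ) (c : Fin n → ℂ) : EuclideanSpace ℝ (Fin n) →L[ℝ] ℂ :=
  ∑ i, c i • ((Complex.ofRealCLM).comp (EuclideanSpace.proj i))

lemma Lc_apply (n : ℕ) (c : Fin n → ℂ) (x : EuclideanSpace ℝ (Fin n)) :
    Lc n c x = ∑ i, c i * x i := by
  simp [Lc, mul_comm]

lemma Lc_single (n : ℕ) (c : Fin n → ℂ) (j : Fin n) :
    Lc n c (EuclideanSpace.single j 1) = c j := by
  simp only [Lc_apply, EuclideanSpace.single_apply]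
  rw [Finset.sum_eq_single j] <;> simp +contextual

lemma hasFDerivAt_cexp_sum (n : ℕ) (c : Fin n → ℂ) (x : EuclideanSpace ℝ (Fin n)) :
    HasFDerivAt (fun y : EuclideanSpace ℝ (Fin n) => Complex.exp (∑ i, c i * (y i : ℂ)))
      (Complex.exp (∑ i, c i * x i) • Lc n c) x := by
  have h1 : HasFDerivAt (fun y : EuclideanSpace ℝ (Fin n) => Lc n c y) (Lc n c) x :=
    (Lc n c).hasFDerivAt
  have h2 := ((Complex.hasDerivAt_exp (Lc n c x)).hasFDerivAt.restrictScalars ℝ)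
  have h3 := h2.comp x h1
  have key : (fun y : EuclideanSpace ℝ (Fin n) => Complex.exp (∑ i, c i * (y i : ℂ)))
      = Complex.exp ∘ (Lc n c) := by
    ext y; simp [Lc_apply]
  rw [key]
  refine h3.congr_fderiv ?_
  ext v
  simp only [ContinuousLinearMap.smul_apply, smul_eq_mul, Lc_apply,
    ContinuousLinearMap.coe_comp', Function.comp_apply, ContinuousLinearMap.coe_restrictScalars',
    ContinuousLinearMap.toSpanSingleton_apply]
  rw [Finset.mul_sum, Finset.sum_mul]
  exact Finset.sum_congr rfl fun i _ => by ring

lemma fderiv_cexp_sum (n : ℕ) (c : Fin n → ℂ) (x : EuclideanSpace ℝ (Fin n)) (j : Fin n) :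
    fderiv ℝ (fun y : EuclideanSpace ℝ (Fin n) => Complex.exp (∑ i, c i * (y i : ℂ))) x
      (EuclideanSpace.single j 1) = c j * Complex.exp (∑ i, c i * (x i : ℂ)) := by
  rw [(hasFDerivAt_cexp_sum n c x).fderiv]
  simp [Lc_single, mul_comm]

lemma fderiv2_cexp_sum (n : ℕ) (c : Fin n → ℂ) (x : EuclideanSpace ℝ (Fin n)) (i j : Fin n) :
    fderiv ℝ (fun y : EuclideanSpace ℝ (Fin n) =>
        fderiv ℝ (fun w : EuclideanSpace ℝ (Fin n) => Complex.exp (∑ k, c k * (w k : ℂ))) y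
          (EuclideanSpace.single j 1)) x (EuclideanSpace.single i 1)
      = c j * (c i * Complex.exp (∑ k, c k * (x k : ℂ))) := by
  have key : (fun y : EuclideanSpace ℝ (Fin n) =>
      fderiv ℝ (fun w : EuclideanSpace ℝ (Fin n) => Complex.exp (∑ k, c k * (w k : ℂ))) y
        (EuclideanSpace.single j 1))
      = fun y => c j * Complex.exp (∑ k, c k * (y k : ℂ)) := by
    ext y; exact fderiv_cexp_sum n c y j
  rw [key]
  have h := ((hasFDerivAt_cexp_sum n c x).const_smul (c j)).fderiv
  simp only [Pi.smul_def, smul_eq_mul] at h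
  rw [h]
  simp only [ContinuousLinearMap.smul_apply, Lc_single, smul_eq_mul]
  ring

lemma sum_matrix (n : ℕ) (k : ℂ) (u v w : Fin n → ℂ) :
    ∑ i, ∑ j, ((if i = j then (1:ℂ) else 0) + k * u i * u j) * v i * w j
      = (∑ i, v i * w i) + k * (∑ i, u i * v i) * (∑ j, u j * w j) := by
  have h1 : ∀ i j : Fin n, ((if i = j then (1:ℂ) else 0) + k * u i * u j) * v i * w j
      = (if i = j then v i * w j else 0) + k * (u i * v i) * (u j * w j) := by
    intro i j; split <;> ring
  simp only [h1, Finset.sum_add_distrib, Finset.sum_ite_eq, Finset.mem_univ, if_true]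
  congr 1
  simp only [← Finset.mul_sum, ← Finset.sum_mul]


/-- CGO-type complex exponential solutions: for `1 < p, q < ∞`, unit vector `z`, `ξ ≠ 0`
with `z ⊥ ξ`, `s = (p−1)^{-1/2}|ξ|` and `ζ± = ±s z + i ξ ∈ ℂⁿ`, with `A = I + (p−2) z⊗z`
and `A^q = I + (q−2) z⊗z` (bilinear dot product on `ℂⁿ`): `ζ±·Aζ± = 0`, hence
`V±(x) = exp(ζ±·x)` satisfy `Div(A∇V±) = Σ_{ij} A_{ij} ∂_i∂_j V± = 0`, and moreover
`A^q ∇V₊ · ∇V₋ = −((p+q−2)/(p−1)) |ξ|² e^{2iξ·x}`. -/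
theorem cgo_solutions_double_phase (n : ℕ) (p q : ℝ) (hp : 1 < p) (hq : 1 < q)
    (z ξ : EuclideanSpace ℝ (Fin n)) (hz : ‖z‖ = 1) (hξ : ξ ≠ 0)
    (hperp : (inner ℝ z ξ : ℝ) = 0) :
    let s : ℝ := (p - 1) ^ (-(1 : ℝ) / 2) * ‖ξ‖
    let ζp : Fin n → ℂ := fun i => (↑(s * z i) : ℂ) + Complex.I * (↑(ξ i) : ℂ)
    let ζm : Fin n → ℂ := fun i => (↑(-(s * z i)) : ℂ) + Complex.I * (↑(ξ i) : ℂ)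
    let A : Fin n → Fin n → ℂ := fun i j =>
      (if i = j then 1 else 0) + ((p : ℂ) - 2) * (↑(z i) : ℂ) * (↑(z j) : ℂ)
    let Aq : Fin n → Fin n → ℂ := fun i j =>
      (if i = j then 1 else 0) + ((q : ℂ) - 2) * (↑(z i) : ℂ) * (↑(z j) : ℂ)
    let Vp : EuclideanSpace ℝ (Fin n) → ℂ := fun x => Complex.exp (∑ i, ζp i * (↑(x i) : ℂ))
    let Vm : EuclideanSpace ℝ (Fin n) → ℂ := fun x => Complex.exp (∑ i, ζm i * (↑(x i) : ℂ))
    (∑ i, ∑ j, A i j * ζp i * ζp j) = 0 ∧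
    (∑ i, ∑ j, A i j * ζm i * ζm j) = 0 ∧
    (∀ x, (∑ i, ∑ j, A i j *
        fderiv ℝ (fun y => fderiv ℝ Vp y (EuclideanSpace.single j 1)) x
          (EuclideanSpace.single i 1)) = 0) ∧
    (∀ x, (∑ i, ∑ j, A i j *
        fderiv ℝ (fun y => fderiv ℝ Vm y (EuclideanSpace.single j 1)) x
          (EuclideanSpace.single i 1)) = 0) ∧
    (∀ x, (∑ i, ∑ j, Aq i j *
        fderiv ℝ Vp x (EuclideanSpace.single j 1) *
        fderiv ℝ Vm x (EuclideanSpace.single i 1)) =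
      -(((p : ℂ) + (q : ℂ) - 2) / ((p : ℂ) - 1)) * ((‖ξ‖ : ℂ)) ^ 2 *
        Complex.exp (2 * Complex.I * (↑((inner ℝ ξ x : ℝ)) : ℂ))) := by
  intro s ζp ζm A Aq Vp Vm
  have hp1 : (0:ℝ) < p - 1 := by linarith
  -- real scalar facts
  have hzz : (∑ i, z i * z i : ℝ) = 1 := by
    have h := real_inner_self_eq_norm_sq z
    rw [hz] at h
    simp only [PiLp.inner_apply, RCLike.inner_apply, conj_trivial] at h
    simpa [mul_comm] using h
  have hzx : (∑ i, z i * ξ i : ℝ) = 0 := by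
    simpa [PiLp.inner_apply, RCLike.inner_apply, mul_comm] using hperp
  have hxx : (∑ i, ξ i * ξ i : ℝ) = ‖ξ‖ ^ 2 := by
    have h := real_inner_self_eq_norm_sq ξ
    simp only [PiLp.inner_apply, RCLike.inner_apply, conj_trivial] at h
    simpa [mul_comm] using h
  have hs2 : s ^ 2 * (p - 1) = ‖ξ‖ ^ 2 := by
    have : ((p - 1) ^ (-(1:ℝ) / 2)) ^ 2 = (p - 1)⁻¹ := by
      rw [← Real.rpow_natCast ((p - 1) ^ (-(1:ℝ) / 2)) 2, ← Real.rpow_mul hp1.le]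
      norm_num
      exact Real.rpow_neg_one _
    show ((p - 1) ^ (-(1:ℝ) / 2) * ‖ξ‖) ^ 2 * (p - 1) = ‖ξ‖ ^ 2
    rw [mul_pow, this]
    field_simp
  -- complex scalar facts
  have hZz : (∑ i, (z i : ℂ) * (z i : ℂ)) = 1 := by
    have : (∑ i, (z i : ℂ) * (z i : ℂ)) = ((∑ i, z i * z i : ℝ) : ℂ) := by push_cast; rfl
    rw [this, hzz]; norm_num
  have hZx : (∑ i, (z i : ℂ) * (ξ i : ℂ)) = 0 := by
    have : (∑ i, (z i : ℂ) * (ξ i : ℂ)) = ((∑ i, z i * ξ i : ℝ) : ℂ) := by push_cast; rfl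
    rw [this, hzx]; norm_num
  have hXx : (∑ i, (ξ i : ℂ) * (ξ i : ℂ)) = ((‖ξ‖ : ℂ)) ^ 2 := by
    have : (∑ i, (ξ i : ℂ) * (ξ i : ℂ)) = ((∑ i, ξ i * ξ i : ℝ) : ℂ) := by push_cast; rfl
    rw [this, hxx]; push_cast; ring
  have hS2 : ((s : ℂ)) ^ 2 * ((p:ℂ) - 1) = ((‖ξ‖ : ℂ)) ^ 2 := by
    have : (((s ^ 2 * (p - 1)) : ℝ) : ℂ) = (((‖ξ‖ ^ 2 : ℝ)) : ℂ) := by rw [hs2]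
    push_cast at this
    convert this using 2 <;> push_cast <;> ring
  have hCp1 : ((p:ℂ) - 1) ≠ 0 := by
    intro h
    have : (p:ℂ) = 1 := by linear_combination h
    have : p = 1 := by exact_mod_cast this
    linarith
  -- dot products
  have epp : (∑ i, ζp i * ζp i) = ((s:ℂ))^2 - ((‖ξ‖:ℂ))^2 := by
    have h : ∀ i, ζp i * ζp i = ((s:ℂ))^2 * ((z i : ℂ) * (z i : ℂ))
        + 2 * (s:ℂ) * Complex.I * ((z i : ℂ) * (ξ i : ℂ)) - (ξ i : ℂ) * (ξ i : ℂ) := by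
      intro i
      simp only [ζp]
      push_cast
      linear_combination ((ξ i : ℂ))^2 * Complex.I_sq
    simp only [h, Finset.sum_sub_distrib, Finset.sum_add_distrib, ← Finset.mul_sum,
      hZz, hZx, hXx]
    ring
  have emm : (∑ i, ζm i * ζm i) = ((s:ℂ))^2 - ((‖ξ‖:ℂ))^2 := by
    have h : ∀ i, ζm i * ζm i = ((s:ℂ))^2 * ((z i : ℂ) * (z i : ℂ))
        - 2 * (s:ℂ) * Complex.I * ((z i : ℂ) * (ξ i : ℂ)) - (ξ i : ℂ) * (ξ i : ℂ) := by
      intro i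
      simp only [ζm]
      push_cast
      linear_combination ((ξ i : ℂ))^2 * Complex.I_sq
    simp only [h, Finset.sum_sub_distrib, ← Finset.mul_sum, hZz, hZx, hXx]
    ring
  have emp : (∑ i, ζm i * ζp i) = -((s:ℂ))^2 - ((‖ξ‖:ℂ))^2 := by
    have h : ∀ i, ζm i * ζp i = -((s:ℂ))^2 * ((z i : ℂ) * (z i : ℂ))
        - (ξ i : ℂ) * (ξ i : ℂ) := by
      intro i
      simp only [ζm, ζp]
      push_cast
      linear_combination ((ξ i : ℂ))^2 * Complex.I_sq
    simp only [h, Finset.sum_sub_distrib, ← Finset.mul_sum, hZz, hXx]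
    ring
  have ezp : (∑ i, (z i : ℂ) * ζp i) = (s:ℂ) := by
    have h : ∀ i, (z i : ℂ) * ζp i = (s:ℂ) * ((z i : ℂ) * (z i : ℂ))
        + Complex.I * ((z i : ℂ) * (ξ i : ℂ)) := by
      intro i; simp only [ζp]; push_cast; ring
    simp only [h, Finset.sum_add_distrib, ← Finset.mul_sum, hZz, hZx]
    ring
  have ezm : (∑ i, (z i : ℂ) * ζm i) = -(s:ℂ) := by
    have h : ∀ i, (z i : ℂ) * ζm i = -(s:ℂ) * ((z i : ℂ) * (z i : ℂ))
        + Complex.I * ((z i : ℂ) * (ξ i : ℂ)) := by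
      intro i; simp only [ζm]; push_cast; ring
    simp only [h, Finset.sum_add_distrib, ← Finset.mul_sum, hZz, hZx]
    ring
  -- main quadratic forms
  have qp : (∑ i, ∑ j, A i j * ζp i * ζp j) = 0 := by
    rw [sum_matrix n ((p:ℂ) - 2) (fun i => (z i : ℂ)) ζp ζp, epp, ezp]
    linear_combination hS2
  have qm : (∑ i, ∑ j, A i j * ζm i * ζm j) = 0 := by
    rw [sum_matrix n ((p:ℂ) - 2) (fun i => (z i : ℂ)) ζm ζm, emm, ezm]
    linear_combination hS2
  refine ⟨qp, qm, ?_, ?_, ?_⟩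
  · intro x
    simp only [Vp, fderiv2_cexp_sum]
    have h : ∀ i j, A i j * (ζp j * (ζp i * Complex.exp (∑ k, ζp k * (x k : ℂ))))
        = (A i j * ζp i * ζp j) * Complex.exp (∑ k, ζp k * (x k : ℂ)) := fun i j => by ring
    simp only [h, ← Finset.sum_mul, qp, zero_mul]
  · intro x
    simp only [Vm, fderiv2_cexp_sum]
    have h : ∀ i j, A i j * (ζm j * (ζm i * Complex.exp (∑ k, ζm k * (x k : ℂ))))
        = (A i j * ζm i * ζm j) * Complex.exp (∑ k, ζm k * (x k : ℂ)) := fun i j => by ring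
    simp only [h, ← Finset.sum_mul, qm, zero_mul]
  · intro x
    simp only [Vp, Vm, fderiv_cexp_sum]
    have h : ∀ i j, Aq i j * (ζp j * Complex.exp (∑ k, ζp k * (x k : ℂ)))
        * (ζm i * Complex.exp (∑ k, ζm k * (x k : ℂ)))
        = (Aq i j * ζm i * ζp j)
          * (Complex.exp (∑ k, ζp k * (x k : ℂ)) * Complex.exp (∑ k, ζm k * (x k : ℂ))) :=
      fun i j => by ring
    simp only [h, ← Finset.sum_mul]
    rw [sum_matrix n ((q:ℂ) - 2) (fun i => (z i : ℂ)) ζm ζp, emp, ezm, ezp]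
    rw [← Complex.exp_add]
    have hexp : (∑ k, ζp k * (x k : ℂ)) + (∑ k, ζm k * (x k : ℂ))
        = 2 * Complex.I * ((inner ℝ ξ x : ℝ) : ℂ) := by
      rw [← Finset.sum_add_distrib]
      have h2 : ∀ k, ζp k * (x k : ℂ) + ζm k * (x k : ℂ)
          = 2 * Complex.I * ((ξ k : ℂ) * (x k : ℂ)) := by
        intro k; simp only [ζp, ζm]; push_cast; ring
      simp only [h2, ← Finset.mul_sum]
      congr 1
      have : ((inner ℝ ξ x : ℝ) : ℂ) = ((∑ k, ξ k * x k : ℝ) : ℂ) := by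
        congr 1
        try simp [PiLp.inner_apply, RCLike.inner_apply]
        exact Finset.sum_congr rfl fun i _ => mul_comm _ _
      rw [this]; push_cast; try ring
    rw [hexp]
    have hsc : (-((s:ℂ))^2 - ((‖ξ‖:ℂ))^2 + ((q:ℂ) - 2) * -(s:ℂ) * (s:ℂ))
        = -(((p : ℂ) + (q : ℂ) - 2) / ((p : ℂ) - 1)) * ((‖ξ‖ : ℂ)) ^ 2 := by
      field_simp
      linear_combination (1 - (q:ℂ)) * hS2
    rw [hsc]
end
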